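/- Let G be a simple graph with n vertices and e edges, let p be the number of triangles of G (triples of distinct vertices inducing 3 edges), and let d_v denote the degree of vertex v. Then, as integers, f(G) = e·n − Σ_{v ∈ V(G)} d_v² + 4·p. -/

import Mathlib

open Finset

open Classical in
/-- A triple of distinct vertices is *frustrated* if it induces an odd number of edges. -/
noncomputable def frustrated {V : Type*} (G : SimpleGraph V) (u v w : V) : Prop :=
  Odd ((if G.Adj u v then 1 else 0) + (if G.Adj u w then 1 else 0) +
       (if G.Adj v w then 1 else 0) : ℕ)

/-- The number of frustrated triangles of `G`: the number of 3-element vertex subsets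
inducing an odd number of edges. -/
noncomputable def fCount {V : Type*} [Fintype V] [DecidableEq V] (G : SimpleGraph V) : ℕ := by
  classical
  exact ((Finset.univ.powersetCard 3).filter
    (fun s : Finset V => ∃ u v w : V, u ≠ v ∧ u ≠ w ∧ v ≠ w ∧ s = {u, v, w} ∧
      frustrated G u v w)).card

set_option linter.unusedSectionVars false
set_option linter.unnecessarySeqFocus false
set_option linter.unreachableTactic false
set_option linter.unusedTactic false
set_option maxHeartbeats 1000000

lemma six_fold {V : Type*} [Fintype V] [DecidableEq V] (Q : V → V → V → Prop)
    (hQ12 : ∀ u v w, Q u v w → Q v u w) (hQ23 : ∀ u v w, Q u v w → Q u w v)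
    (D : Finset (V × V × V)) (S : Finset (Finset V))
    (hD : ∀ t : V × V × V, t ∈ D ↔
      (t.1 ≠ t.2.1 ∧ t.1 ≠ t.2.2 ∧ t.2.1 ≠ t.2.2 ∧ Q t.1 t.2.1 t.2.2))
    (hS : ∀ s : Finset V, s ∈ S ↔
      ∃ u v w : V, u ≠ v ∧ u ≠ w ∧ v ≠ w ∧ s = {u, v, w} ∧ Q u v w) :
    D.card = 6 * S.card := by
  classical
  have hmap : ∀ t ∈ D, ({t.1, t.2.1, t.2.2} : Finset V) ∈ S := by
    rintro ⟨u, v, w⟩ ht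
    obtain ⟨h1, h2, h3, hq⟩ := (hD _).mp ht
    exact (hS _).mpr ⟨u, v, w, h1, h2, h3, rfl, hq⟩
  rw [Finset.card_eq_sum_card_fiberwise hmap]
  have hfib6 : ∀ s ∈ S,
      (D.filter (fun t : V × V × V => ({t.1, t.2.1, t.2.2} : Finset V) = s)).card = 6 := by
    intro s hs
    obtain ⟨u, v, w, h1, h2, h3, rfl, hq⟩ := (hS s).mp hs
    have hall : ∀ a b c : V, a ≠ b → a ≠ c → b ≠ c →
        ({a, b, c} : Finset V) = {u, v, w} → Q a b c →
        (a, b, c) ∈ ({(u,v,w),(u,w,v),(v,u,w),(v,w,u),(w,u,v),(w,v,u)} :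
          Finset (V × V × V)) := by
      intro a b c hab hac hbc hset _
      have ha : a = u ∨ a = v ∨ a = w := by
        have := hset ▸ (Finset.mem_insert_self a {b, c})
        simpa using this
      have hb : b = u ∨ b = v ∨ b = w := by
        have : b ∈ ({a, b, c} : Finset V) := by simp
        rw [hset] at this; simpa using this
      have hc : c = u ∨ c = v ∨ c = w := by
        have : c ∈ ({a, b, c} : Finset V) := by simp
        rw [hset] at this; simpa using this
      have hu : u = a ∨ u = b ∨ u = c := by
        have : u ∈ ({a, b, c} : Finset V) := by rw [hset]; simp
        simpa using this
      have hv : v = a ∨ v = b ∨ v = c := by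
        have : v ∈ ({a, b, c} : Finset V) := by rw [hset]; simp
        simpa using this
      have hw : w = a ∨ w = b ∨ w = c := by
        have : w ∈ ({a, b, c} : Finset V) := by rw [hset]; simp
        simpa using this
      simp only [Finset.mem_insert, Finset.mem_singleton, Prod.ext_iff]
      rcases ha with rfl|rfl|rfl <;> rcases hb with rfl|rfl|rfl <;>
        rcases hc with rfl|rfl|rfl <;> tauto
    have hQall : Q u v w ∧ Q u w v ∧ Q v u w ∧ Q v w u ∧ Q w u v ∧ Q w v u := by
      refine ⟨hq, hQ23 _ _ _ hq, hQ12 _ _ _ hq, ?_, ?_, ?_⟩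
      · exact hQ23 _ _ _ (hQ12 _ _ _ hq)
      · exact hQ12 _ _ _ (hQ23 _ _ _ hq)
      · exact hQ12 _ _ _ (hQ23 _ _ _ (hQ12 _ _ _ hq))
    have hfib : D.filter (fun t : V × V × V => ({t.1, t.2.1, t.2.2} : Finset V) = {u, v, w})
        = ({(u,v,w),(u,w,v),(v,u,w),(v,w,u),(w,u,v),(w,v,u)} : Finset (V × V × V)) := by
      ext ⟨a, b, c⟩
      rw [Finset.mem_filter, hD]
      constructor
      · rintro ⟨⟨hab, hac, hbc, hqabc⟩, hset⟩
        exact hall a b c hab hac hbc hset hqabc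
      · intro h
        simp only [Finset.mem_insert, Finset.mem_singleton, Prod.ext_iff] at h
        obtain ⟨rfl, rfl, rfl⟩ | ⟨rfl, rfl, rfl⟩ | ⟨rfl, rfl, rfl⟩ | ⟨rfl, rfl, rfl⟩ |
          ⟨rfl, rfl, rfl⟩ | ⟨rfl, rfl, rfl⟩ := h
        · exact ⟨⟨h1, h2, h3, hQall.1⟩, rfl⟩
        · exact ⟨⟨h2, h1, fun h => h3 h.symm, hQall.2.1⟩, by
            ext x; simp; tauto⟩
        · exact ⟨⟨fun h => h1 h.symm, h3, h2, hQall.2.2.1⟩, by ext x; simp; tauto⟩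
        · exact ⟨⟨h3, fun h => h1 h.symm, fun h => h2 h.symm, hQall.2.2.2.1⟩, by
            ext x; simp; tauto⟩
        · exact ⟨⟨fun h => h2 h.symm, fun h => h3 h.symm, h1, hQall.2.2.2.2.1⟩, by
            ext x; simp; tauto⟩
        · exact ⟨⟨fun h => h3 h.symm, fun h => h2 h.symm, fun h => h1 h.symm,
            hQall.2.2.2.2.2⟩, by ext x; simp; tauto⟩
    rw [hfib]
    rw [Finset.card_insert_of_notMem (by simp [Prod.ext_iff]; tauto),
        Finset.card_insert_of_notMem (by simp [Prod.ext_iff]; tauto),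
        Finset.card_insert_of_notMem (by simp [Prod.ext_iff]; tauto),
        Finset.card_insert_of_notMem (by simp [Prod.ext_iff]; tauto),
        Finset.card_insert_of_notMem (by simp [Prod.ext_iff]; tauto),
        Finset.card_singleton]
  rw [Finset.sum_congr rfl hfib6, Finset.sum_const, smul_eq_mul, mul_comm]
set_option linter.unusedSectionVars false
set_option maxHeartbeats 1000000

section Aux
variable {V : Type*} [Fintype V] [DecidableEq V] (G : SimpleGraph V) [DecidableRel G.Adj]

def aZ (u v : V) : ℤ := if G.Adj u v then 1 else 0
def bZ (u v : V) : ℤ := if u = v then 0 else 1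

variable {G}

lemma aZ_comm (u v : V) : aZ G u v = aZ G v u := by simp [aZ, SimpleGraph.adj_comm]
lemma bZ_comm (u v : V) : bZ u v = bZ v u := by simp [bZ, eq_comm]
lemma aZ_self (u : V) : aZ G u u = 0 := by simp [aZ]
lemma aZ_mul_bZ (u v : V) : aZ G u v * bZ u v = aZ G u v := by
  by_cases h : G.Adj u v
  · simp [aZ, bZ, h, h.ne]
  · simp [aZ, h]
lemma aZ_sq (u v : V) : aZ G u v * aZ G u v = aZ G u v := by
  by_cases h : G.Adj u v <;> simp [aZ, h]
lemma bZ_eq (u v : V) : bZ u v = 1 - (if u = v then (1:ℤ) else 0) := by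
  by_cases h : u = v <;> simp [bZ, h]

lemma sum_bb {u v : V} (h : u ≠ v) :
    ∑ w : V, bZ u w * bZ v w = (Fintype.card V : ℤ) - 2 := by
  have key : ∀ w : V, bZ u w * bZ v w
      = 1 - (if w = u then (1:ℤ) else 0) - (if w = v then (1:ℤ) else 0) := by
    intro w
    by_cases h1 : u = w <;> by_cases h2 : v = w
    · exact absurd (h1.trans h2.symm) h
    · subst h1; simp [bZ, h]
    · subst h2; simp [bZ, Ne.symm h]
    · simp [bZ, h1, h2, Ne.symm h1, Ne.symm h2]
  simp only [key]
  rw [Finset.sum_sub_distrib, Finset.sum_sub_distrib, Finset.sum_const,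
    Finset.sum_ite_eq' univ u (fun _ => (1:ℤ)), Finset.sum_ite_eq' univ v (fun _ => (1:ℤ))]
  simp only [mem_univ, if_true, card_univ, smul_eq_mul, mul_one]
  ring

lemma sum_aZ (u : V) : ∑ v : V, aZ G u v = (G.degree u : ℤ) := by
  unfold aZ
  rw [Finset.sum_boole]
  congr 1
  rw [SimpleGraph.degree]
  congr 1
  ext v
  simp

lemma sum_sum_aZ : ∑ u : V, ∑ v : V, aZ G u v = 2 * (G.edgeFinset.card : ℤ) := by
  simp only [sum_aZ]
  rw [← Nat.cast_sum, SimpleGraph.sum_degrees_eq_twice_card_edges]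
  push_cast
  ring

/-- inner sum for the "single edge" terms -/
lemma inner_pair (u v : V) :
    ∑ w : V, (bZ u v * bZ u w * bZ v w) * aZ G u v
      = aZ G u v * ((Fintype.card V : ℤ) - 2) := by
  by_cases h : u = v
  · subst h
    simp [bZ, aZ_self]
  · have hb : bZ u v = 1 := by simp [bZ, h]
    have key : ∀ w : V, (bZ u v * bZ u w * bZ v w) * aZ G u v
        = aZ G u v * (bZ u w * bZ v w) := by
      intro w; rw [hb]; ring
    rw [Finset.sum_congr rfl (fun w _ => key w), ← Finset.mul_sum, sum_bb h]

lemma sum_S1 :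
    ∑ u : V, ∑ v : V, ∑ w : V, (bZ u v * bZ u w * bZ v w) * aZ G u v
      = 2 * (G.edgeFinset.card : ℤ) * ((Fintype.card V : ℤ) - 2) := by
  simp only [inner_pair]
  simp only [← Finset.sum_mul]
  rw [sum_sum_aZ]

lemma sum_S2 :
    ∑ u : V, ∑ v : V, ∑ w : V, (bZ u v * bZ u w * bZ v w) * aZ G u w
      = 2 * (G.edgeFinset.card : ℤ) * ((Fintype.card V : ℤ) - 2) := by
  have h1 : ∀ u : V, ∑ v : V, ∑ w : V, (bZ u v * bZ u w * bZ v w) * aZ G u w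
      = ∑ w : V, ∑ v : V, (bZ u v * bZ u w * bZ v w) * aZ G u w :=
    fun u => Finset.sum_comm
  simp only [h1]
  have h2 : ∀ u w : V, ∑ v : V, (bZ u v * bZ u w * bZ v w) * aZ G u w
      = ∑ v : V, (bZ u w * bZ u v * bZ w v) * aZ G u w := by
    intro u w
    refine Finset.sum_congr rfl fun v _ => ?_
    rw [bZ_comm v w]; ring
  simp only [h2, inner_pair]
  simp only [← Finset.sum_mul]
  rw [sum_sum_aZ]

lemma sum_S3 :
    ∑ u : V, ∑ v : V, ∑ w : V, (bZ u v * bZ u w * bZ v w) * aZ G v w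
      = 2 * (G.edgeFinset.card : ℤ) * ((Fintype.card V : ℤ) - 2) := by
  rw [Finset.sum_comm]
  have h1 : ∀ v : V, ∑ u : V, ∑ w : V, (bZ u v * bZ u w * bZ v w) * aZ G v w
      = ∑ w : V, ∑ u : V, (bZ u v * bZ u w * bZ v w) * aZ G v w :=
    fun v => Finset.sum_comm
  simp only [h1]
  have h2 : ∀ v w : V, ∑ u : V, (bZ u v * bZ u w * bZ v w) * aZ G v w
      = ∑ u : V, (bZ v w * bZ v u * bZ w u) * aZ G v w := by
    intro v w
    refine Finset.sum_congr rfl fun u _ => ?_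
    rw [bZ_comm u v, bZ_comm u w]; ring
  simp only [h2, inner_pair]
  simp only [← Finset.sum_mul]
  rw [sum_sum_aZ]

/-- inner double sum for the "cherry" terms -/
lemma inner_cherry (u : V) :
    ∑ v : V, ∑ w : V, (bZ u v * bZ u w * bZ v w) * (aZ G u v * aZ G u w)
      = (G.degree u : ℤ) ^ 2 - (G.degree u : ℤ) := by
  have key : ∀ v w : V, (bZ u v * bZ u w * bZ v w) * (aZ G u v * aZ G u w)
      = aZ G u v * aZ G u w - (if w = v then aZ G u v * aZ G u w else 0) := by
    intro v w
    have h1 : (bZ u v * bZ u w * bZ v w) * (aZ G u v * aZ G u w)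
        = aZ G u v * aZ G u w * bZ v w := by
      calc (bZ u v * bZ u w * bZ v w) * (aZ G u v * aZ G u w)
          = (aZ G u v * bZ u v) * ((aZ G u w * bZ u w) * bZ v w) := by ring
        _ = aZ G u v * (aZ G u w * bZ v w) := by rw [aZ_mul_bZ, aZ_mul_bZ]
        _ = aZ G u v * aZ G u w * bZ v w := by ring
    rw [h1, bZ_eq]
    by_cases h : v = w
    · subst h; simp
    · have h' : ¬ w = v := fun hh => h hh.symm
      simp [h, h']
  simp only [key, Finset.sum_sub_distrib, Finset.sum_ite_eq' univ, mem_univ, if_true, aZ_sq]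
  have h2 : ∑ v : V, ∑ w : V, aZ G u v * aZ G u w
      = (G.degree u : ℤ) * (G.degree u : ℤ) := by
    simp only [← Finset.mul_sum, sum_aZ]
    rw [← Finset.sum_mul, sum_aZ]
  rw [h2, sum_aZ]
  ring

lemma sum_S4 :
    ∑ u : V, ∑ v : V, ∑ w : V, (bZ u v * bZ u w * bZ v w) * (aZ G u v * aZ G u w)
      = (∑ x : V, (G.degree x : ℤ) ^ 2) - 2 * (G.edgeFinset.card : ℤ) := by
  simp only [inner_cherry]
  rw [Finset.sum_sub_distrib]
  congr 1
  rw [← Nat.cast_sum, SimpleGraph.sum_degrees_eq_twice_card_edges]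
  push_cast
  ring

lemma sum_S5 :
    ∑ u : V, ∑ v : V, ∑ w : V, (bZ u v * bZ u w * bZ v w) * (aZ G u v * aZ G v w)
      = (∑ x : V, (G.degree x : ℤ) ^ 2) - 2 * (G.edgeFinset.card : ℤ) := by
  rw [Finset.sum_comm]
  have h2 : ∀ v u w : V, (bZ u v * bZ u w * bZ v w) * (aZ G u v * aZ G v w)
      = (bZ v u * bZ v w * bZ u w) * (aZ G v u * aZ G v w) := by
    intro v u w
    rw [bZ_comm u v, aZ_comm u v]; ring
  simp only [h2, inner_cherry]
  rw [Finset.sum_sub_distrib]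
  congr 1
  rw [← Nat.cast_sum, SimpleGraph.sum_degrees_eq_twice_card_edges]
  push_cast
  ring

lemma sum_S6 :
    ∑ u : V, ∑ v : V, ∑ w : V, (bZ u v * bZ u w * bZ v w) * (aZ G u w * aZ G v w)
      = (∑ x : V, (G.degree x : ℤ) ^ 2) - 2 * (G.edgeFinset.card : ℤ) := by
  have h1 : ∀ u : V, ∑ v : V, ∑ w : V, (bZ u v * bZ u w * bZ v w) * (aZ G u w * aZ G v w)
      = ∑ w : V, ∑ v : V, (bZ u v * bZ u w * bZ v w) * (aZ G u w * aZ G v w) :=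
    fun u => Finset.sum_comm
  simp only [h1]
  rw [Finset.sum_comm]
  have h2 : ∀ w u v : V, (bZ u v * bZ u w * bZ v w) * (aZ G u w * aZ G v w)
      = (bZ w u * bZ w v * bZ u v) * (aZ G w u * aZ G w v) := by
    intro w u v
    rw [bZ_comm u w, bZ_comm v w, aZ_comm u w, aZ_comm v w]; ring
  simp only [h2, inner_cherry]
  rw [Finset.sum_sub_distrib]
  congr 1
  rw [← Nat.cast_sum, SimpleGraph.sum_degrees_eq_twice_card_edges]
  push_cast
  ring

lemma absorb3 (u v w : V) :
    (bZ u v * bZ u w * bZ v w) * (aZ G u v * aZ G u w * aZ G v w)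
      = aZ G u v * aZ G u w * aZ G v w := by
  calc (bZ u v * bZ u w * bZ v w) * (aZ G u v * aZ G u w * aZ G v w)
      = (aZ G u v * bZ u v) * ((aZ G u w * bZ u w) * (aZ G v w * bZ v w)) := by ring
    _ = aZ G u v * (aZ G u w * aZ G v w) := by rw [aZ_mul_bZ, aZ_mul_bZ, aZ_mul_bZ]
    _ = aZ G u v * aZ G u w * aZ G v w := by ring

lemma point_tri (u v w : V) :
    aZ G u v * aZ G u w * aZ G v w
      = (if (u ≠ v ∧ u ≠ w ∧ v ≠ w ∧ (G.Adj u v ∧ G.Adj u w ∧ G.Adj v w))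
          then (1:ℤ) else 0) := by
  by_cases g1 : G.Adj u v <;> by_cases g2 : G.Adj u w <;> by_cases g3 : G.Adj v w <;>
    simp [aZ, g1, g2, g3] <;>
    (try rw [if_pos ⟨g1.ne, g2.ne, g3.ne⟩]) <;>
    exact ⟨g1.ne, g2.ne, g3.ne⟩

end Aux

section Main
variable {V : Type*} [Fintype V] [DecidableEq V] {G : SimpleGraph V} [DecidableRel G.Adj]

lemma sum_prod3 (f : V → V → V → ℤ) :
    ∑ u : V, ∑ v : V, ∑ w : V, f u v w = ∑ t : V × V × V, f t.1 t.2.1 t.2.2 := by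
  simp [Fintype.sum_prod_type]

lemma card_tri :
    ((Finset.univ : Finset (V × V × V)).filter (fun t : V × V × V =>
        t.1 ≠ t.2.1 ∧ t.1 ≠ t.2.2 ∧ t.2.1 ≠ t.2.2 ∧
          (G.Adj t.1 t.2.1 ∧ G.Adj t.1 t.2.2 ∧ G.Adj t.2.1 t.2.2))).card
      = 6 * (G.cliqueFinset 3).card := by
  apply six_fold (fun u v w : V => G.Adj u v ∧ G.Adj u w ∧ G.Adj v w)
    (fun u v w h => ⟨h.1.symm, h.2.2, h.2.1⟩)
    (fun u v w h => ⟨h.2.1, h.1, h.2.2.symm⟩)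
  · intro t
    rw [Finset.mem_filter]
    simp only [Finset.mem_univ, true_and]
  · intro s
    rw [SimpleGraph.mem_cliqueFinset_iff, SimpleGraph.is3Clique_iff]
    constructor
    · rintro ⟨u, v, w, h1, h2, h3, rfl⟩
      exact ⟨u, v, w, h1.ne, h2.ne, h3.ne, rfl, h1, h2, h3⟩
    · rintro ⟨u, v, w, _, _, _, rfl, h1, h2, h3⟩
      exact ⟨u, v, w, h1, h2, h3, rfl⟩

lemma sum_S7 :
    ∑ u : V, ∑ v : V, ∑ w : V, (bZ u v * bZ u w * bZ v w) *
        (aZ G u v * aZ G u w * aZ G v w)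
      = 6 * ((G.cliqueFinset 3).card : ℤ) := by
  simp only [absorb3]
  simp only [point_tri]
  rw [sum_prod3, Finset.sum_boole]
  rw [show ((Finset.univ : Finset (V × V × V)).filter (fun t : V × V × V =>
        t.1 ≠ t.2.1 ∧ t.1 ≠ t.2.2 ∧ t.2.1 ≠ t.2.2 ∧
          (G.Adj t.1 t.2.1 ∧ G.Adj t.1 t.2.2 ∧ G.Adj t.2.1 t.2.2))).card
      = 6 * (G.cliqueFinset 3).card from card_tri]
  push_cast
  ring

end Main

section Frust
variable {V : Type*} [Fintype V] [DecidableEq V]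

lemma frustrated_swap12 (G : SimpleGraph V) (u v w : V) :
    frustrated G u v w → frustrated G v u w := by
  unfold frustrated
  by_cases g1 : G.Adj u v <;> by_cases g2 : G.Adj u w <;> by_cases g3 : G.Adj v w <;>
    simp [g1, g2, g3, G.adj_comm v u, G.adj_comm w u, G.adj_comm w v, Nat.odd_iff]

lemma frustrated_swap23 (G : SimpleGraph V) (u v w : V) :
    frustrated G u v w → frustrated G u w v := by
  unfold frustrated
  by_cases g1 : G.Adj u v <;> by_cases g2 : G.Adj u w <;> by_cases g3 : G.Adj v w <;>
    simp [g1, g2, g3, G.adj_comm v u, G.adj_comm w u, G.adj_comm w v, Nat.odd_iff]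

open Classical in
lemma card_frust (G : SimpleGraph V) :
    ((Finset.univ : Finset (V × V × V)).filter (fun t : V × V × V =>
        t.1 ≠ t.2.1 ∧ t.1 ≠ t.2.2 ∧ t.2.1 ≠ t.2.2 ∧
          frustrated G t.1 t.2.1 t.2.2)).card = 6 * fCount G := by
  unfold fCount
  apply six_fold (fun u v w : V => frustrated G u v w)
    (frustrated_swap12 G) (frustrated_swap23 G)
  · intro t
    rw [Finset.mem_filter]
    simp only [Finset.mem_univ, true_and]
  · intro s
    rw [Finset.mem_filter, Finset.mem_powersetCard_univ]
    constructor
    · rintro ⟨_, h⟩; exact h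
    · rintro ⟨u, v, w, h1, h2, h3, rfl, hq⟩
      refine ⟨?_, u, v, w, h1, h2, h3, rfl, hq⟩
      rw [Finset.card_insert_of_notMem (by simp [h1, h2]),
        Finset.card_insert_of_notMem (by simp [h3]), Finset.card_singleton]

open Classical in
lemma point_frust (G : SimpleGraph V) [DecidableRel G.Adj] (u v w : V) :
    (if (u ≠ v ∧ u ≠ w ∧ v ≠ w ∧ frustrated G u v w) then (1:ℤ) else 0)
      = (bZ u v * bZ u w * bZ v w) * aZ G u v
        + (bZ u v * bZ u w * bZ v w) * aZ G u w
        + (bZ u v * bZ u w * bZ v w) * aZ G v w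
        - 2 * ((bZ u v * bZ u w * bZ v w) * (aZ G u v * aZ G u w))
        - 2 * ((bZ u v * bZ u w * bZ v w) * (aZ G u v * aZ G v w))
        - 2 * ((bZ u v * bZ u w * bZ v w) * (aZ G u w * aZ G v w))
        + 4 * ((bZ u v * bZ u w * bZ v w) * (aZ G u v * aZ G u w * aZ G v w)) := by
  by_cases h1 : u = v <;> by_cases h2 : u = w <;> by_cases h3 : v = w <;>
    by_cases g1 : G.Adj u v <;> by_cases g2 : G.Adj u w <;> by_cases g3 : G.Adj v w <;>
    simp [frustrated, aZ, bZ, h1, h2, h3, g1, g2, g3, Nat.odd_iff] <;> norm_num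

lemma sum3_mul (c : ℤ) (f : V → V → V → ℤ) :
    ∑ u : V, ∑ v : V, ∑ w : V, c * f u v w
      = c * ∑ u : V, ∑ v : V, ∑ w : V, f u v w := by
  simp [Finset.mul_sum]

open Classical in
lemma master (G : SimpleGraph V) [DecidableRel G.Adj] :
    ∑ u : V, ∑ v : V, ∑ w : V,
        (if (u ≠ v ∧ u ≠ w ∧ v ≠ w ∧ frustrated G u v w) then (1:ℤ) else 0)
      = 6 * ((G.edgeFinset.card : ℤ) * (Fintype.card V : ℤ)
          - (∑ x : V, (G.degree x : ℤ) ^ 2) + 4 * ((G.cliqueFinset 3).card : ℤ)) := by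
  have step1 : ∑ u : V, ∑ v : V, ∑ w : V,
      (if (u ≠ v ∧ u ≠ w ∧ v ≠ w ∧ frustrated G u v w) then (1:ℤ) else 0)
      = ∑ u : V, ∑ v : V, ∑ w : V,
        ((bZ u v * bZ u w * bZ v w) * aZ G u v
        + (bZ u v * bZ u w * bZ v w) * aZ G u w
        + (bZ u v * bZ u w * bZ v w) * aZ G v w
        - 2 * ((bZ u v * bZ u w * bZ v w) * (aZ G u v * aZ G u w))
        - 2 * ((bZ u v * bZ u w * bZ v w) * (aZ G u v * aZ G v w))
        - 2 * ((bZ u v * bZ u w * bZ v w) * (aZ G u w * aZ G v w))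
        + 4 * ((bZ u v * bZ u w * bZ v w) * (aZ G u v * aZ G u w * aZ G v w))) :=
    Finset.sum_congr rfl fun u _ => Finset.sum_congr rfl fun v _ =>
      Finset.sum_congr rfl fun w _ => point_frust G u v w
  rw [step1]
  simp only [Finset.sum_add_distrib, Finset.sum_sub_distrib]
  rw [sum3_mul, sum3_mul, sum3_mul, sum3_mul]
  rw [sum_S1, sum_S2, sum_S3, sum_S4, sum_S5, sum_S6, sum_S7]
  ring

end Frust

theorem fCount_formula_degrees
    (n : ℕ) (G : SimpleGraph (Fin n)) [DecidableRel G.Adj] (e p : ℕ)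
    (he : e = G.edgeFinset.card) (hp : p = (G.cliqueFinset 3).card) :
    (fCount G : ℤ) = e * n - ∑ v : Fin n, (G.degree v : ℤ) ^ 2 + 4 * p := by
  classical
  subst he
  subst hp
  have hm := master (V := Fin n) G
  rw [sum_prod3] at hm
  have e1 : ((6 * fCount G : ℕ) : ℤ)
      = 6 * ((G.edgeFinset.card : ℤ) * (Fintype.card (Fin n) : ℤ)
          - (∑ x : Fin n, (G.degree x : ℤ) ^ 2) + 4 * ((G.cliqueFinset 3).card : ℤ)) := by
    calc ((6 * fCount G : ℕ) : ℤ)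
        = (((Finset.univ : Finset (Fin n × Fin n × Fin n)).filter (fun t =>
            t.1 ≠ t.2.1 ∧ t.1 ≠ t.2.2 ∧ t.2.1 ≠ t.2.2 ∧
              frustrated G t.1 t.2.1 t.2.2)).card : ℤ) := by
          rw [card_frust G]
      _ = _ := by
          rw [← Finset.sum_boole]
          exact (Finset.sum_congr rfl (fun t _ => by congr)).trans hm
  rw [Fintype.card_fin] at e1
  push_cast at e1
  linarith
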